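/- For Re(s) > 2, the Dirichlet series of the generalized gcd-sum function satisfies Σ_{n≥1} h_b(n)/n^s = ζ(bs−1)ζ(s−1)/ζ(bs). -/

import Mathlib

noncomputable def ggcd (b r s : ℕ) : ℕ := sSup {d : ℕ | 0 < d ∧ d ^ b ∣ r ∧ d ^ b ∣ s}

noncomputable def hgcd (b n : ℕ) : ℕ := ∑ j ∈ Finset.Icc 1 n, ggcd b j n

open Finset LSeries
open scoped LSeries.notation

lemma lcm_pow_dvd_aux {a c m b : ℕ} (hm : m ≠ 0) (ha : a ^ b ∣ m) (hc : c ^ b ∣ m) :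
    Nat.lcm a c ^ b ∣ m := by
  rcases Nat.eq_zero_or_pos b with rfl | hb
  · simpa using Nat.one_dvd m
  have ha0 : a ≠ 0 := by
    rintro rfl
    rw [zero_pow hb.ne'] at ha
    exact hm (Nat.eq_zero_of_zero_dvd ha)
  have hc0 : c ≠ 0 := by
    rintro rfl
    rw [zero_pow hb.ne'] at hc
    exact hm (Nat.eq_zero_of_zero_dvd hc)
  have hl0 : Nat.lcm a c ≠ 0 := Nat.lcm_ne_zero ha0 hc0
  rw [← Nat.factorization_le_iff_dvd (pow_ne_zero _ hl0) hm, Nat.factorization_pow,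
    Nat.factorization_lcm ha0 hc0]
  replace ha := (Nat.factorization_le_iff_dvd (pow_ne_zero _ ha0) hm).mpr ha
  replace hc := (Nat.factorization_le_iff_dvd (pow_ne_zero _ hc0) hm).mpr hc
  rw [Nat.factorization_pow] at ha hc
  rw [Finsupp.le_def]
  intro p
  have hap := Finsupp.le_def.mp ha p
  have hcp := Finsupp.le_def.mp hc p
  simp only [Finsupp.smul_apply, smul_eq_mul, Finsupp.sup_apply] at hap hcp ⊢
  rcases max_cases (a.factorization p) (c.factorization p) with ⟨h, _⟩ | ⟨h, _⟩ <;>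
    rw [h] <;> assumption

lemma dvd_ggcd_iff {b : ℕ} (hb : b ≠ 0) {j n : ℕ} (hj : j ≠ 0) (hn : n ≠ 0) (d : ℕ) :
    d ∣ ggcd b j n ↔ 0 < d ∧ d ^ b ∣ j ∧ d ^ b ∣ n := by
  set S := {d : ℕ | 0 < d ∧ d ^ b ∣ j ∧ d ^ b ∣ n} with hS
  have h1 : (1 : ℕ) ∈ S := ⟨one_pos, by simp⟩
  have hbdd : BddAbove S := by
    refine ⟨n, fun d hd => ?_⟩
    exact le_trans (Nat.le_self_pow hb d) (Nat.le_of_dvd (Nat.pos_of_ne_zero hn) hd.2.2)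
  have hmem : ggcd b j n ∈ S := Nat.sSup_mem ⟨1, h1⟩ hbdd
  constructor
  · intro hd
    exact ⟨Nat.pos_of_dvd_of_pos hd hmem.1, (pow_dvd_pow_of_dvd hd b).trans hmem.2.1,
      (pow_dvd_pow_of_dvd hd b).trans hmem.2.2⟩
  · intro hd
    have hl : Nat.lcm d (ggcd b j n) ∈ S :=
      ⟨Nat.pos_of_ne_zero (Nat.lcm_ne_zero hd.1.ne' hmem.1.ne'),
        lcm_pow_dvd_aux hj hd.2.1 hmem.2.1, lcm_pow_dvd_aux hn hd.2.2 hmem.2.2⟩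
    have h1' : Nat.lcm d (ggcd b j n) ≤ ggcd b j n := le_csSup hbdd hl
    have h2' : ggcd b j n ≤ Nat.lcm d (ggcd b j n) :=
      Nat.le_of_dvd hl.1 (Nat.dvd_lcm_right _ _)
    have heq : Nat.lcm d (ggcd b j n) = ggcd b j n := le_antisymm h1' h2'
    exact heq ▸ Nat.dvd_lcm_left _ _

lemma ggcd_eq_sum {b : ℕ} (hb : b ≠ 0) {j n : ℕ} (hj : j ≠ 0) (hn : n ≠ 0) :
    ggcd b j n = ∑ d ∈ (Finset.Icc 1 n).filter (fun d => d ^ b ∣ j ∧ d ^ b ∣ n),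
      Nat.totient d := by
  have key := dvd_ggcd_iff hb hj hn
  have hD : ggcd b j n ≠ 0 := ((key _).mp dvd_rfl).1.ne'
  rw [← Nat.sum_totient (ggcd b j n)]
  apply Finset.sum_congr _ (fun _ _ => rfl)
  ext d
  simp only [Nat.mem_divisors, Finset.mem_filter, Finset.mem_Icc]
  constructor
  · rintro ⟨hd, -⟩
    obtain ⟨hd0, hdj, hdn⟩ := (key d).mp hd
    exact ⟨⟨hd0, le_trans (Nat.le_self_pow hb d) (Nat.le_of_dvd (Nat.pos_of_ne_zero hn) hdn)⟩,
      hdj, hdn⟩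
  · rintro ⟨⟨hd1, -⟩, hdj, hdn⟩
    exact ⟨(key d).mpr ⟨hd1, hdj, hdn⟩, hD⟩

lemma hgcd_eq {b : ℕ} (hb : b ≠ 0) {n : ℕ} (hn : n ≠ 0) :
    hgcd b n = ∑ d ∈ (Finset.Icc 1 n).filter (fun d => d ^ b ∣ n),
      Nat.totient d * (n / d ^ b) := by
  unfold hgcd
  have h1 : ∑ j ∈ Finset.Icc 1 n, ggcd b j n
      = ∑ j ∈ Finset.Icc 1 n, ∑ d ∈ (Finset.Icc 1 n).filter
          (fun d => d ^ b ∣ j ∧ d ^ b ∣ n), Nat.totient d := by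
    refine Finset.sum_congr rfl fun j hj => ?_
    rw [Finset.mem_Icc] at hj
    exact ggcd_eq_sum hb (by omega) hn
  rw [h1]
  simp only [Finset.sum_filter]
  rw [Finset.sum_comm]
  apply Finset.sum_congr rfl
  intro d _
  by_cases h : d ^ b ∣ n
  · simp only [h, and_true]
    rw [← Finset.sum_filter, Finset.sum_const, show Finset.Icc 1 n = Finset.Ioc 0 n from Finset.Icc_add_one_left_eq_Ioc 0 n,
      Nat.Ioc_filter_dvd_card_eq_div, smul_eq_mul, mul_comm]
    simp
  · simp [h]

/-- The totient function at `b`-th power roots, as a function `ℕ → ℂ`. -/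
noncomputable def Afun (b : ℕ) : ℕ → ℂ :=
  fun k => ∑ d ∈ k.divisors, if d ^ b = k then (Nat.totient d : ℂ) else 0

lemma Afun_pow {b : ℕ} (hb : b ≠ 0) {d : ℕ} (hd : d ≠ 0) :
    Afun b (d ^ b) = (Nat.totient d : ℂ) := by
  unfold Afun
  rw [Finset.sum_eq_single d]
  · simp
  · intro e _ hed
    rw [if_neg (fun h => hed (Nat.pow_left_injective hb h))]
  · intro h
    exact absurd (Nat.mem_divisors.mpr ⟨dvd_pow_self d hb, pow_ne_zero _ hd⟩) h

lemma Afun_zero_of_not_pow {b : ℕ} {k : ℕ} (h : ∀ d, d ^ b ≠ k) : Afun b k = 0 := by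
  unfold Afun
  exact Finset.sum_eq_zero fun d _ => if_neg (h d)

lemma Afun_norm_le {b : ℕ} (hb : b ≠ 0) (k : ℕ) (hk : k ≠ 0) : ‖Afun b k‖ ≤ (k : ℝ) := by
  by_cases h : ∃ d, d ^ b = k
  · obtain ⟨d, rfl⟩ := h
    have hd : d ≠ 0 := by rintro rfl; rw [zero_pow hb] at hk; exact hk rfl
    rw [Afun_pow hb hd]
    simp only [Complex.norm_natCast]
    exact_mod_cast le_trans (Nat.totient_le d) (Nat.le_self_pow hb d)
  · push_neg at h
    rw [Afun_zero_of_not_pow h, norm_zero]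
    positivity

/-- `hgcd b` is the Dirichlet convolution of `Afun b` and the identity. -/
lemma hgcd_eq_conv {b : ℕ} (hb : b ≠ 0) :
    (fun n => (hgcd b n : ℂ)) = (Afun b) ⍟ (fun n => (n : ℂ)) := by
  funext n
  rcases eq_or_ne n 0 with rfl | hn
  · simp [hgcd]
  rw [LSeries.convolution_def]
  simp only
  rw [Nat.sum_divisorsAntidiagonal (fun k m => Afun b k * (m : ℂ))]
  unfold Afun
  have step1 : ∀ k ∈ n.divisors,
      (∑ d ∈ k.divisors, if d ^ b = k then (Nat.totient d : ℂ) else 0) * ((n / k : ℕ) : ℂ) =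
      ∑ d ∈ Finset.Icc 1 n, (if d ^ b = k then (Nat.totient d : ℂ) * ((n / k : ℕ) : ℂ) else 0) := by
    intro k hk
    have hk0 : k ≠ 0 := (Nat.pos_of_mem_divisors hk).ne'
    have hkn : k ≤ n := Nat.divisor_le hk
    have hsub : k.divisors ⊆ Finset.Icc 1 n := by
      intro e he
      rw [Finset.mem_Icc]
      exact ⟨Nat.pos_of_mem_divisors he, le_trans (Nat.divisor_le he) hkn⟩
    have hzero : ∀ e ∈ Finset.Icc 1 n, e ∉ k.divisors →
        (if e ^ b = k then (Nat.totient e : ℂ) * ((n / k : ℕ) : ℂ) else 0) = 0 := by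
      intro e _ he
      split_ifs with hek
      · exact absurd (Nat.mem_divisors.mpr ⟨hek ▸ dvd_pow_self e hb, hk0⟩) he
      · rfl
    rw [Finset.sum_mul, ← Finset.sum_subset hsub hzero]
    refine Finset.sum_congr rfl fun e _ => ?_
    rw [ite_mul, zero_mul]
  rw [Finset.sum_congr rfl step1, Finset.sum_comm]
  have step2 : ∀ e ∈ Finset.Icc 1 n,
      (∑ k ∈ n.divisors, if e ^ b = k then (Nat.totient e : ℂ) * ((n / k : ℕ) : ℂ) else 0) =
      (if e ^ b ∣ n then (Nat.totient e : ℂ) * ((n / e ^ b : ℕ) : ℂ) else 0) := by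
    intro e _
    rw [Finset.sum_ite_eq n.divisors (e ^ b)
      (fun k => (Nat.totient e : ℂ) * ((n / k : ℕ) : ℂ))]
    simp [Nat.mem_divisors, hn]
  rw [Finset.sum_congr rfl step2]
  rw [hgcd_eq hb hn]
  push_cast
  rw [Finset.sum_filter]

lemma bs_re {b : ℕ} (hb : 2 ≤ b) {s : ℂ} (hs : 2 < s.re) : 2 < ((b : ℂ) * s).re := by
  have : ((b : ℂ) * s).re = (b : ℝ) * s.re := by
    simp [Complex.mul_re]
  rw [this]
  have hb' : (2 : ℝ) ≤ (b : ℝ) := by exact_mod_cast hb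
  nlinarith

lemma term_id_eq {s : ℂ} (hs : 2 < s.re) (n : ℕ) :
    LSeries.term (fun n => (n : ℂ)) s n = LSeries.term 1 (s - 1) n := by
  rcases eq_or_ne n 0 with rfl | hn
  · simp [LSeries.term_zero]
  rw [LSeries.term_of_ne_zero hn, LSeries.term_of_ne_zero hn]
  have hn' : (n : ℂ) ≠ 0 := Nat.cast_ne_zero.mpr hn
  have hpow : (n : ℂ) ^ s = (n : ℂ) ^ (s - 1) * (n : ℂ) := by
    have h := Complex.cpow_add (s - 1) 1 hn'
    rw [Complex.cpow_one] at h
    rw [← h]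
    congr 1
    ring
  have hns : (n : ℂ) ^ (s - 1) ≠ 0 := by
    intro h
    rcases (Complex.cpow_eq_zero_iff _ _).mp h with ⟨h1, _⟩
    exact hn' h1
  simp only [Pi.one_apply]
  rw [hpow]
  field_simp

lemma LSeries_id_eq {s : ℂ} (hs : 2 < s.re) :
    LSeries (fun n => (n : ℂ)) s = riemannZeta (s - 1) := by
  unfold LSeries
  rw [tsum_congr (term_id_eq hs)]
  exact LSeries_one_eq_riemannZeta (by simp; linarith)

lemma LSeriesSummable_id {s : ℂ} (hs : 2 < s.re) :
    LSeriesSummable (fun n => (n : ℂ)) s := by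
  have : LSeriesSummable 1 (s - 1) := LSeriesSummable_one_iff.mpr (by simp; linarith)
  exact this.congr fun n => (term_id_eq hs n).symm

lemma LSeriesSummable_phi {w : ℂ} (hw : 2 < w.re) :
    LSeriesSummable (fun n => (Nat.totient n : ℂ)) w := by
  apply LSeriesSummable_of_le_const_mul_rpow (x := 2) hw
  refine ⟨1, fun n hn => ?_⟩
  simp only [Complex.norm_natCast, one_mul]
  have : ((2 : ℝ) - 1) = 1 := by norm_num
  rw [this, Real.rpow_one]
  exact_mod_cast Nat.totient_le n

lemma conv_one_phi : (1 : ℕ → ℂ) ⍟ (fun n => (Nat.totient n : ℂ)) = fun n : ℕ => (n : ℂ) := by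
  funext n
  rcases eq_or_ne n 0 with rfl | hn
  · simp
  rw [LSeries.convolution_def]
  simp only [Pi.one_apply, one_mul]
  rw [Nat.sum_divisorsAntidiagonal' (fun k m => (Nat.totient m : ℂ))]
  rw [← Nat.cast_sum]
  rw [Nat.sum_totient]

lemma LSeries_phi_eq {w : ℂ} (hw : 2 < w.re) :
    LSeries (fun n => (Nat.totient n : ℂ)) w = riemannZeta (w - 1) / riemannZeta w := by
  have h1 : 1 < w.re := by linarith
  have hz : riemannZeta w ≠ 0 := riemannZeta_ne_zero_of_one_lt_re h1
  have hc := LSeries_convolution' (LSeriesSummable_one_iff.mpr h1) (LSeriesSummable_phi hw)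
  rw [conv_one_phi, LSeries_id_eq hw, LSeries_one_eq_riemannZeta h1] at hc
  rw [eq_div_iff hz, hc]
  ring

lemma term_Afun_eq {b : ℕ} (hb : b ≠ 0) {s : ℂ} (d : ℕ) :
    LSeries.term (Afun b) s (d ^ b) =
      LSeries.term (fun n => (Nat.totient n : ℂ)) ((b : ℂ) * s) d := by
  rcases eq_or_ne d 0 with rfl | hd
  · rw [zero_pow hb]
    simp [LSeries.term_zero]
  have hdb : d ^ b ≠ 0 := pow_ne_zero _ hd
  rw [LSeries.term_of_ne_zero hdb, LSeries.term_of_ne_zero hd, Afun_pow hb hd]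
  congr 1
  rw [Nat.cast_pow, Complex.natCast_cpow_natCast_mul]

lemma term_Afun_zero {b : ℕ} {s : ℂ} {k : ℕ} (h : ∀ d, d ^ b ≠ k) :
    LSeries.term (Afun b) s k = 0 := by
  rcases eq_or_ne k 0 with rfl | hk
  · simp [LSeries.term_zero]
  rw [LSeries.term_of_ne_zero hk, Afun_zero_of_not_pow h, zero_div]

lemma LSeries_Afun_eq {b : ℕ} (hb : 2 ≤ b) {s : ℂ} (hs : 2 < s.re) :
    LSeries (Afun b) s =
      riemannZeta ((b : ℂ) * s - 1) / riemannZeta ((b : ℂ) * s) := by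
  have hb0 : b ≠ 0 := by omega
  have hinj : Function.Injective (fun d : ℕ => d ^ b) := Nat.pow_left_injective hb0
  have hsupp : Function.support (LSeries.term (Afun b) s) ⊆
      Set.range (fun d : ℕ => d ^ b) := by
    intro k hk
    by_contra h
    apply hk
    apply term_Afun_zero
    intro d hd
    exact h ⟨d, hd⟩
  have := hinj.tsum_eq (f := LSeries.term (Afun b) s) hsupp
  unfold LSeries
  rw [← this, tsum_congr (fun d => term_Afun_eq hb0 d)]
  exact LSeries_phi_eq (bs_re hb hs)

lemma LSeriesSummable_Afun {b : ℕ} (hb : 2 ≤ b) {s : ℂ} (hs : 2 < s.re) :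
    LSeriesSummable (Afun b) s := by
  apply LSeriesSummable_of_le_const_mul_rpow (x := 2) hs
  refine ⟨1, fun n hn => ?_⟩
  have : ((2 : ℝ) - 1) = 1 := by norm_num
  rw [this, Real.rpow_one, one_mul]
  exact Afun_norm_le (by omega : b ≠ 0) n hn

theorem hgcd_dirichlet_series (b : ℕ) (hb : 2 ≤ b) (s : ℂ) (hs : 2 < s.re) :
    ∑' n : ℕ+, (hgcd b n : ℂ) / (n : ℂ) ^ s =
      riemannZeta ((b : ℂ) * s - 1) * riemannZeta (s - 1) / riemannZeta ((b : ℂ) * s) := by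
  have hb0 : b ≠ 0 := by omega
  have key : ∑' n : ℕ+, (hgcd b n : ℂ) / (n : ℂ) ^ s
      = LSeries (fun n => (hgcd b n : ℂ)) s := by
    unfold LSeries
    have hinj : Function.Injective (fun n : ℕ+ => (n : ℕ)) := fun a b h => PNat.coe_injective h
    have hsupp : Function.support (LSeries.term (fun n => (hgcd b n : ℂ)) s) ⊆
        Set.range (fun n : ℕ+ => (n : ℕ)) := by
      intro k hk
      rcases eq_or_ne k 0 with rfl | h0
      · simp [LSeries.term_zero] at hk
      · exact ⟨⟨k, Nat.pos_of_ne_zero h0⟩, rfl⟩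
    rw [← hinj.tsum_eq (f := LSeries.term (fun n => (hgcd b n : ℂ)) s) hsupp]
    apply tsum_congr
    intro n
    rw [LSeries.term_of_ne_zero n.ne_zero]
  rw [key, hgcd_eq_conv hb0,
    LSeries_convolution' (LSeriesSummable_Afun hb hs) (LSeriesSummable_id hs),
    LSeries_Afun_eq hb hs, LSeries_id_eq hs]
  ring
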